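/- Let G = F₂ be the free group on generators x, y, and let A = T_x be the set of elements of G whose reduced word begins with x. Then A is uniformly strongly generic: every nonempty finite intersection of left translates of A and of its complement is 2-generic. Moreover A is not periodic, since {xⁿA : n ∈ ℕ} = {T_{x^{n+1}} : n ∈ ℕ} is infinite. -/

import Mathlib

open Pointwise

/-- The set of elements of the free group on two generators whose reduced word
begins with the first generator `x`. -/
def A15 : Set (FreeGroup (Fin 2)) :=
  {g : FreeGroup (Fin 2) | g.toWord.head? = some ((0 : Fin 2), true)}

namespace Stmt15Aux

/-- The "no cancellation" adjacency condition for reduced words. -/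
def cond (a b : Fin 2 × Bool) : Prop := ¬(a.1 = b.1 ∧ a.2 = !b.2)

instance : DecidableRel cond := fun a b => by unfold cond; infer_instance

lemma chain'_reduce (L : List (Fin 2 × Bool)) :
    List.Chain' cond (FreeGroup.reduce L) := by
  induction L with
  | nil => exact List.isChain_nil
  | cons x L ih =>
    rw [FreeGroup.reduce.cons]
    rcases h : FreeGroup.reduce L with _ | ⟨hd, tl⟩
    · exact List.isChain_singleton x
    · rw [h] at ih
      dsimp only
      split_ifs with hc
      · exact ih.tail
      · exact List.isChain_cons_cons.2 ⟨hc, ih⟩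

lemma reduce_eq_self {L : List (Fin 2 × Bool)} (h : List.Chain' cond L) :
    FreeGroup.reduce L = L := by
  induction L with
  | nil => rfl
  | cons x L ih =>
    have ht : FreeGroup.reduce L = L := ih h.tail
    rw [FreeGroup.reduce.cons, ht]
    cases L with
    | nil => rfl
    | cons b tl =>
      dsimp only
      rw [if_neg (List.isChain_cons_cons.1 h).1]

lemma toWord_chain (u : FreeGroup (Fin 2)) : List.Chain' cond u.toWord := by
  rw [← FreeGroup.reduce_toWord]; exact chain'_reduce _

lemma mul_toWord {u w : FreeGroup (Fin 2)}
    (h : List.Chain' cond (u.toWord ++ w.toWord)) :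
    (u * w).toWord = u.toWord ++ w.toWord := by
  conv_lhs => rw [← FreeGroup.mk_toWord (x := u), ← FreeGroup.mk_toWord (x := w)]
  rw [FreeGroup.mul_mk, FreeGroup.toWord_mk, reduce_eq_self h]

lemma key : ∀ (N : ℕ) (u : FreeGroup (Fin 2)), u.toWord.length < N →
    (u * FreeGroup.of 1 ^ N).toWord ≠ [] ∧
    (u * FreeGroup.of 1 ^ N).toWord.getLast? = some ((1 : Fin 2), true) ∧
    ((u * FreeGroup.of 1 ^ N).toWord.head? = some ((0 : Fin 2), true) ↔
      u.toWord.head? = some ((0 : Fin 2), true)) := by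
  intro N
  induction N with
  | zero => intro u h; exact absurd h (Nat.not_lt_zero _)
  | succ N ih =>
    intro u hlen
    by_cases hend : u.toWord.getLast? = some ((1 : Fin 2), false)
    · -- the word of u ends with y⁻¹ : cancel it against one y.
      have hne : u.toWord ≠ [] := by
        intro h; rw [h] at hend; simp at hend
      set L' := u.toWord.dropLast with hL'
      have hsplit : L' ++ [((1 : Fin 2), false)] = u.toWord :=
        List.dropLast_append_getLast? _ hend
      have hchainL' : List.Chain' cond L' :=
        (toWord_chain u).prefix ⟨[((1 : Fin 2), false)], hsplit⟩
      have hu' : (FreeGroup.mk L').toWord = L' := by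
        rw [FreeGroup.toWord_mk, reduce_eq_self hchainL']
      have hud : u = FreeGroup.mk L' * FreeGroup.mk [((1 : Fin 2), false)] := by
        rw [FreeGroup.mul_mk, hsplit, FreeGroup.mk_toWord]
      have hinv : FreeGroup.mk [((1 : Fin 2), false)] = (FreeGroup.of (1 : Fin 2))⁻¹ := by
        apply eq_inv_of_mul_eq_one_left
        have : FreeGroup.of (1 : Fin 2) = FreeGroup.mk [((1 : Fin 2), true)] := rfl
        rw [this, FreeGroup.mul_mk, ← FreeGroup.toWord_eq_nil_iff, FreeGroup.toWord_mk]
        decide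
      have step : u * FreeGroup.of 1 ^ (N + 1) = FreeGroup.mk L' * FreeGroup.of 1 ^ N := by
        rw [hud, hinv, pow_succ', mul_assoc, inv_mul_cancel_left]
      have hlen' : (FreeGroup.mk L').toWord.length < N := by
        rw [hu']
        have h1 : L'.length + 1 = u.toWord.length := by
          rw [← hsplit]; simp
        omega
      obtain ⟨h1, h2, h3⟩ := ih (FreeGroup.mk L') hlen'
      rw [step]
      refine ⟨h1, h2, h3.trans ?_⟩
      rw [hu', ← hsplit, List.head?_append]
      rcases L' with _ | ⟨a, tl⟩
      · simp
      · simp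
    · -- no cancellation at all.
      have hrep : (FreeGroup.of (1 : Fin 2) ^ (N + 1)).toWord
          = List.replicate (N + 1) ((1 : Fin 2), true) := FreeGroup.toWord_of_pow _ _
      have hchain : List.Chain' cond (u.toWord ++ (FreeGroup.of 1 ^ (N + 1)).toWord) := by
        rw [hrep]
        refine List.isChain_append.2 ⟨toWord_chain u,
          List.isChain_replicate_of_rel _ (by decide), ?_⟩
        intro x hx y hy
        have hy' : y = ((1 : Fin 2), true) := by
          rw [List.replicate_succ] at hy
          simp at hy
          exact hy.symm
        subst hy'
        rintro ⟨e1, e2⟩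
        apply hend
        have : x = ((1 : Fin 2), false) := Prod.ext_iff.2 ⟨e1, by simpa using e2⟩
        rwa [this] at hx
      rw [mul_toWord hchain, hrep]
      refine ⟨by simp, ?_, ?_⟩
      · rw [List.replicate_succ' (n := N), ← List.append_assoc, List.getLast?_concat]
      · rw [List.head?_append]
        rcases hu : u.toWord with _ | ⟨a, tl⟩
        · simp [List.replicate_succ]
        · simp

end Stmt15Aux

open Stmt15Aux in
theorem stmt15 :
    (∀ s t : Finset (FreeGroup (Fin 2)),
        ((⋂ a ∈ s, a • A15) ∩ ⋂ b ∈ t, b • A15ᶜ).Nonempty →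
        ∃ h₁ h₂ : FreeGroup (Fin 2),
          (Set.univ : Set (FreeGroup (Fin 2))) ⊆
            h₁ • ((⋂ a ∈ s, a • A15) ∩ ⋂ b ∈ t, b • A15ᶜ) ∪
              h₂ • ((⋂ a ∈ s, a • A15) ∩ ⋂ b ∈ t, b • A15ᶜ)) ∧
      Set.Infinite (Set.range fun n : ℕ => (FreeGroup.of (0 : Fin 2)) ^ n • A15) := by
  constructor
  · intro s t ⟨g, hg⟩
    set B : Set (FreeGroup (Fin 2)) :=
      (⋂ a ∈ s, a • A15) ∩ ⋂ b ∈ t, b • A15ᶜ with hB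
    obtain ⟨hg1, hg2⟩ := hg
    rw [Set.mem_iInter₂] at hg1
    rw [Set.mem_iInter₂] at hg2
    set N : ℕ := ((s ∪ t).sup fun h => ((h⁻¹ * g).toWord.length)) + 1 with hN
    set c : FreeGroup (Fin 2) := g * FreeGroup.of 1 ^ N with hc
    have hNlt : ∀ h ∈ s ∪ t, (h⁻¹ * g).toWord.length < N := by
      intro h hh
      exact Nat.lt_succ_of_le (Finset.le_sup (f := fun h => (h⁻¹ * g).toWord.length) hh)
    have claim : ∀ w : FreeGroup (Fin 2),
        w.toWord.head? ≠ some ((1 : Fin 2), false) → c * w ∈ B := by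
      intro w hw
      have main : ∀ h : FreeGroup (Fin 2), h ∈ s ∪ t →
          ((h⁻¹ * (c * w)).toWord.head? = some ((0 : Fin 2), true) ↔
            (h⁻¹ * g).toWord.head? = some ((0 : Fin 2), true)) := by
        intro h hh
        obtain ⟨k1, k2, k3⟩ := key N (h⁻¹ * g) (hNlt h hh)
        set v := h⁻¹ * g * FreeGroup.of 1 ^ N with hv
        have hveq : h⁻¹ * (c * w) = v * w := by rw [hc, hv]; group
        have hchain : List.Chain' cond (v.toWord ++ w.toWord) := by
          refine List.isChain_append.2 ⟨toWord_chain v, toWord_chain w, ?_⟩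
          intro x hx y hy
          rw [k2] at hx
          have hx' : x = ((1 : Fin 2), true) := by simpa using hx.symm
          subst hx'
          rintro ⟨e1, e2⟩
          apply hw
          have : y = ((1 : Fin 2), false) := Prod.ext_iff.2 ⟨e1.symm, by simpa using e2.symm⟩
          rwa [this] at hy
        rw [hveq, mul_toWord hchain, List.head?_append]
        rcases hvw : v.toWord with _ | ⟨a, tl⟩
        · exact absurd hvw k1
        · rw [hvw] at k3; simpa using k3
      rw [hB]
      constructor
      · rw [Set.mem_iInter₂]
        intro a ha
        rw [Set.mem_smul_set_iff_inv_smul_mem, smul_eq_mul]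
        have hgA : (a⁻¹ * g).toWord.head? = some ((0 : Fin 2), true) := by
          have := hg1 a ha
          rwa [Set.mem_smul_set_iff_inv_smul_mem, smul_eq_mul] at this
        exact (main a (Finset.mem_union_left _ ha)).2 hgA
      · rw [Set.mem_iInter₂]
        intro b hb
        rw [Set.mem_smul_set_iff_inv_smul_mem, smul_eq_mul]
        have hgA : ¬((b⁻¹ * g).toWord.head? = some ((0 : Fin 2), true)) := by
          have := hg2 b hb
          rwa [Set.mem_smul_set_iff_inv_smul_mem, smul_eq_mul] at this
        exact fun hmem => hgA ((main b (Finset.mem_union_right _ hb)).1 hmem)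
    refine ⟨c⁻¹, (c * FreeGroup.of 0)⁻¹, ?_⟩
    intro v _
    by_cases hv : v.toWord.head? = some ((1 : Fin 2), false)
    · right
      rw [Set.mem_smul_set_iff_inv_smul_mem, smul_eq_mul, inv_inv, mul_assoc]
      apply claim
      have hchain : List.Chain' cond ((FreeGroup.of (0 : Fin 2)).toWord ++ v.toWord) := by
        rw [FreeGroup.toWord_of]
        refine List.isChain_append.2 ⟨List.isChain_singleton _, toWord_chain v, ?_⟩
        intro x hx y hy
        have hx' : x = ((0 : Fin 2), true) := by simpa using hx.symm
        rw [hv] at hy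
        have hy' : y = ((1 : Fin 2), false) := by simpa using hy.symm
        subst hx'; subst hy'
        decide
      rw [mul_toWord hchain, FreeGroup.toWord_of]
      simp
    · left
      rw [Set.mem_smul_set_iff_inv_smul_mem, smul_eq_mul, inv_inv]
      exact claim v hv
  · apply Set.infinite_range_of_injective
    have aux : ∀ n m : ℕ, n < m →
        FreeGroup.of (0 : Fin 2) ^ (n + 1) ∈ FreeGroup.of (0 : Fin 2) ^ n • A15 ∧
        FreeGroup.of (0 : Fin 2) ^ (n + 1) ∉ FreeGroup.of (0 : Fin 2) ^ m • A15 := by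
      intro n m hnm
      constructor
      · rw [Set.mem_smul_set_iff_inv_smul_mem, smul_eq_mul]
        have : (FreeGroup.of (0 : Fin 2) ^ n)⁻¹ * FreeGroup.of (0 : Fin 2) ^ (n + 1)
            = FreeGroup.of (0 : Fin 2) := by rw [pow_succ, inv_mul_cancel_left]
        rw [this]
        show (FreeGroup.of (0 : Fin 2)).toWord.head? = _
        rw [FreeGroup.toWord_of]
        rfl
      · rw [Set.mem_smul_set_iff_inv_smul_mem, smul_eq_mul]
        set k := m - (n + 1) with hk
        have hm : m = (n + 1) + k := by omega
        have heq : (FreeGroup.of (0 : Fin 2) ^ m)⁻¹ * FreeGroup.of (0 : Fin 2) ^ (n + 1)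
            = (FreeGroup.of (0 : Fin 2) ^ k)⁻¹ := by
          rw [hm, pow_add, mul_inv_rev, mul_assoc, inv_mul_cancel, mul_one]
        rw [heq]
        show ¬(((FreeGroup.of (0 : Fin 2) ^ k)⁻¹).toWord.head? = some ((0 : Fin 2), true))
        rw [FreeGroup.toWord_inv, FreeGroup.toWord_of_pow]
        unfold FreeGroup.invRev
        rw [List.map_replicate, List.reverse_replicate]
        cases k with
        | zero => simp
        | succ j => rw [List.replicate_succ]; simp
    intro n m hEq
    have hEq' : FreeGroup.of (0 : Fin 2) ^ n • A15 = FreeGroup.of (0 : Fin 2) ^ m • A15 := hEq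
    by_contra hne
    rcases Nat.lt_or_ge n m with h | h
    · exact (aux n m h).2 (hEq' ▸ (aux n m h).1)
    · have h' : m < n := by omega
      exact (aux m n h').2 (hEq'.symm ▸ (aux m n h').1)
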